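/- Let k ≥ 4 be an integer, N a positive integer, and δ, ε ∈ (0,1). For i = 1, …, k let a_i : ℤ/Nℤ → ℝ be nonnegative functions with ∑_{x ∈ ℤ/Nℤ} a_i(x) ≤ 1. Define R_i = {r ∈ ℤ/Nℤ : |ã_i(r)| ≥ δ}, B_i = {x ∈ ℤ/Nℤ : ‖xr/N‖ ≤ ε for all r ∈ R_i}, β_i = (1/|B_i|)·1_{B_i}, and a_i' = a_i * β_i * β_i. Suppose there are constants D_1, D_2 > 0 such that |R_i| ≤ D_1·δ^{−5/2} and ∑_{r ∈ ℤ/Nℤ} |ã_i(r)|^{k²/(k+1)} ≤ D_2 for every i. Then there is a constant K depending only on k such that for every n' ∈ ℤ/Nℤ, | ∑_{x_1+⋯+x_k=n'} ∏_{i=1}^k a_i'(x_i) − ∑_{x_1+⋯+x_k=n'} ∏_{i=1}^k a_i(x_i) | ≤ K·(D_1·ε²·δ^{−5/2} + D_2·δ^{1/(k+1)})/N. -/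

import Mathlib

open scoped Classical
open Finset

/-- The Fourier transform on `ℤ/Nℤ` of a real function:
`f̃(r) = ∑_x f(x) e(−xr/N)` where `e(t) = e^{2πit}`. -/
noncomputable def dftZMod (N : ℕ) [NeZero N] (f : ZMod N → ℝ) (r : ZMod N) : ℂ :=
  ∑ x : ZMod N, (f x : ℂ) *
    Complex.exp (-(2 * Real.pi * Complex.I * (((x.val * r.val : ℕ) : ℝ) / (N : ℝ))))

/-- `‖t‖`, the distance from a real number `t` to the nearest integer. -/
noncomputable def distNearestInt (t : ℝ) : ℝ := |t - round t|

/-- The super-level set `R = {r : |f̃(r)| ≥ δ}` of the Fourier transform. -/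
noncomputable def fourierLevelSet (N : ℕ) [NeZero N] (δ : ℝ) (f : ZMod N → ℝ) :
    Set (ZMod N) :=
  {r | δ ≤ ‖dftZMod N f r‖}

/-- The Bohr-type set `B = {x : ‖xr/N‖ ≤ ε for all r ∈ R}`. -/
noncomputable def bohrSet (N : ℕ) [NeZero N] (δ ε : ℝ) (f : ZMod N → ℝ) :
    Set (ZMod N) :=
  {x | ∀ r ∈ fourierLevelSet N δ f, distNearestInt (((x.val * r.val : ℕ) : ℝ) / (N : ℝ)) ≤ ε}

/-- The normalized indicator `β = (1/|B|)·1_B` of the Bohr set. -/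
noncomputable def bohrMeasure (N : ℕ) [NeZero N] (δ ε : ℝ) (f : ZMod N → ℝ) :
    ZMod N → ℝ :=
  fun x => if x ∈ bohrSet N δ ε f then ((Nat.card (bohrSet N δ ε f) : ℝ))⁻¹ else 0

/-- Convolution on `ℤ/Nℤ`: `(f*g)(x) = ∑_y f(y) g(x−y)`. -/
noncomputable def convZMod (N : ℕ) [NeZero N] (f g : ZMod N → ℝ) : ZMod N → ℝ :=
  fun x => ∑ y : ZMod N, f y * g (x - y)

/-- The smoothed function `a' = a * β * β`. -/
noncomputable def smoothed (N : ℕ) [NeZero N] (δ ε : ℝ) (a : ZMod N → ℝ) : ZMod N → ℝ :=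
  convZMod N (convZMod N a (bohrMeasure N δ ε a)) (bohrMeasure N δ ε a)

set_option linter.unusedSectionVars false

namespace Transfer

variable (N : ℕ) [NeZero N]

noncomputable def E (m : ℤ) : ℂ :=
  Complex.exp (2 * Real.pi * Complex.I * (m : ℂ) / (N : ℂ))

lemma E_add (m n : ℤ) : E N (m + n) = E N m * E N n := by
  rw [E, E, E, ← Complex.exp_add]; congr 1; push_cast; ring

lemma E_zero : E N 0 = 1 := by simp [E]

lemma E_int_mul (t : ℤ) : E N (N * t) = 1 := by
  have hN : (N : ℂ) ≠ 0 := Nat.cast_ne_zero.mpr (NeZero.ne N)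
  rw [E]
  have : 2 * Real.pi * Complex.I * ((N * t : ℤ) : ℂ) / (N : ℂ) = (t : ℤ) * (2 * Real.pi * Complex.I) := by
    push_cast; field_simp
  rw [this, Complex.exp_int_mul_two_pi_mul_I]

lemma E_eq_of_modeq {m n : ℤ} (h : m ≡ n [ZMOD (N : ℤ)]) : E N m = E N n := by
  obtain ⟨t, ht⟩ := h.dvd
  have hn : n = m + (N : ℤ) * t := by linarith
  rw [hn, E_add, E_int_mul, mul_one]

lemma abs_E (m : ℤ) : ‖E N m‖ = 1 := by
  have : 2 * Real.pi * Complex.I * (m : ℂ) / (N : ℂ)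
      = ((2 * Real.pi * (m : ℝ) / (N : ℝ) : ℝ) : ℂ) * Complex.I := by
    push_cast; ring
  rw [E, this, Complex.norm_exp_ofReal_mul_I]

noncomputable def chi (z : ZMod N) : ℂ := E N (-(z.val : ℤ))

lemma natCast_mod_modeq (a : ℕ) : ((a % N : ℕ) : ℤ) ≡ (a : ℤ) [ZMOD (N : ℤ)] := by
  unfold Int.ModEq
  push_cast
  exact Int.emod_emod_of_dvd _ dvd_rfl

lemma chi_natCast (a : ℕ) : chi N (a : ZMod N) = E N (-(a : ℤ)) := by
  rw [chi]
  apply E_eq_of_modeq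
  have h := natCast_mod_modeq N a
  rw [ZMod.val_natCast]
  exact h.neg

lemma chi_add (z w : ZMod N) : chi N (z + w) = chi N z * chi N w := by
  have h1 : chi N (z + w) = chi N (((z.val + w.val : ℕ) : ZMod N)) := by
    congr 1
    push_cast
    rw [ZMod.natCast_val, ZMod.natCast_val, ZMod.cast_id, ZMod.cast_id]
  rw [h1, chi_natCast]
  have : (-((z.val + w.val : ℕ) : ℤ)) = (-(z.val : ℤ)) + (-(w.val : ℤ)) := by push_cast; ring
  rw [this, E_add, chi, chi]

lemma chi_zero : chi N 0 = 1 := by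
  rw [chi, ZMod.val_zero]; simpa using E_zero N

lemma abs_chi (z : ZMod N) : ‖chi N z‖ = 1 := abs_E N _

lemma chi_sum {ι : Type*} (s : Finset ι) (g : ι → ZMod N) :
    chi N (∑ i ∈ s, g i) = ∏ i ∈ s, chi N (g i) := by
  classical
  induction s using Finset.induction_on with
  | empty => simpa using chi_zero N
  | insert _ _ h ih => rw [Finset.sum_insert h, Finset.prod_insert h, chi_add, ih]

lemma E_eq_one_imp {v : ℤ} (h : E N v = 1) : (N : ℤ) ∣ v := by
  rw [E, Complex.exp_eq_one_iff] at h
  obtain ⟨n, hn⟩ := h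
  have hN : (N : ℂ) ≠ 0 := Nat.cast_ne_zero.mpr (NeZero.ne N)
  have h2 : (2 * Real.pi * Complex.I : ℂ) ≠ 0 := by
    simp [Complex.I_ne_zero, Real.pi_ne_zero, Complex.ofReal_ne_zero]
  have h3 : ((v : ℤ) : ℂ) = ((n * N : ℤ) : ℂ) := by
    field_simp at hn
    apply mul_left_cancel₀ h2
    push_cast
    linear_combination (2 * Real.pi * Complex.I) * hn
  have h4 : v = n * N := by exact_mod_cast h3
  exact ⟨n, by linarith⟩

lemma chi_ne_one {m : ZMod N} (hm : m ≠ 0) : chi N m ≠ 1 := by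
  intro h
  have hdvd : (N : ℤ) ∣ (-(m.val : ℤ)) := E_eq_one_imp N h
  have hdvd' : N ∣ m.val := by
    have := (dvd_neg.mp hdvd)
    exact_mod_cast this
  have hv : m.val = 0 := by
    rcases Nat.eq_zero_or_pos m.val with h0 | h0
    · exact h0
    · exact absurd (Nat.le_of_dvd h0 hdvd') (by have := m.val_lt; omega)
  exact hm ((ZMod.val_eq_zero m).mp hv)

lemma sum_chi (m : ZMod N) : ∑ z : ZMod N, chi N (z * m) = if m = 0 then (N : ℂ) else 0 := by
  split_ifs with h
  · subst h; simp [chi_zero, Finset.card_univ, ZMod.card]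
  · set S := ∑ z : ZMod N, chi N (z * m) with hS
    have reix : ∑ z : ZMod N, chi N ((z + 1) * m) = S :=
      Fintype.sum_equiv (Equiv.addRight (1 : ZMod N)) _ _ (fun z => rfl)
    have key : S = chi N m * S := by
      calc S = ∑ z : ZMod N, chi N ((z + 1) * m) := reix.symm
        _ = ∑ z : ZMod N, chi N m * chi N (z * m) := by
              apply Finset.sum_congr rfl; intro z _; rw [add_mul, one_mul, chi_add, mul_comm]
        _ = chi N m * S := by rw [← Finset.mul_sum]
    have h5 : (1 - chi N m) * S = 0 := by linear_combination key
    rcases mul_eq_zero.mp h5 with h6 | h6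
    · exact absurd (by linear_combination -h6 : chi N m = 1) (chi_ne_one N h)
    · exact h6

lemma dft_eq (g : ZMod N → ℝ) (r : ZMod N) :
    dftZMod N g r = ∑ x : ZMod N, (g x : ℂ) * chi N (x * r) := by
  unfold dftZMod
  apply Finset.sum_congr rfl
  intro x _
  congr 1
  have h1 : (-(2 * Real.pi * Complex.I * (((x.val * r.val : ℕ) : ℝ) / (N : ℝ))) : ℂ)
      = 2 * Real.pi * Complex.I * ((-(x.val * r.val : ℕ) : ℤ) : ℂ) / (N : ℂ) := by
    push_cast; ring
  rw [h1]
  show E N (-(x.val * r.val : ℕ) : ℤ) = chi N (x * r)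
  rw [chi]
  apply E_eq_of_modeq
  have h2 : ((x * r).val : ℤ) = (((x.val * r.val) % N : ℕ) : ℤ) := by
    rw [ZMod.val_mul]
  rw [h2]
  exact ((natCast_mod_modeq N (x.val * r.val)).neg).symm

lemma dft_conv (f g : ZMod N → ℝ) (r : ZMod N) :
    dftZMod N (convZMod N f g) r = dftZMod N f r * dftZMod N g r := by
  rw [dft_eq, dft_eq, dft_eq]
  unfold convZMod
  calc ∑ x : ZMod N, ((∑ y : ZMod N, f y * g (x - y) : ℝ) : ℂ) * chi N (x * r)
      = ∑ x : ZMod N, ∑ y : ZMod N, (f y : ℂ) * (g (x - y) : ℂ) * chi N (x * r) := by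
        apply Finset.sum_congr rfl; intro x _
        push_cast
        rw [Finset.sum_mul]
    _ = ∑ y : ZMod N, ∑ x : ZMod N, (f y : ℂ) * (g (x - y) : ℂ) * chi N (x * r) :=
        Finset.sum_comm
    _ = ∑ y : ZMod N, ∑ z : ZMod N, ((f y : ℂ) * chi N (y * r)) * ((g z : ℂ) * chi N (z * r)) := by
        apply Finset.sum_congr rfl; intro y _
        apply Fintype.sum_equiv (Equiv.subRight y)
        intro x
        simp only [Equiv.subRight_apply]
        have hch : chi N (y * r) * chi N ((x - y) * r) = chi N (x * r) := by
          rw [← chi_add]; congr 1; ring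
        linear_combination (-(f y : ℂ) * (g (x - y) : ℂ)) * hch
    _ = (∑ x : ZMod N, (f x : ℂ) * chi N (x * r)) * ∑ x : ZMod N, (g x : ℂ) * chi N (x * r) := by
        rw [Finset.sum_mul_sum]

lemma inversion {k : ℕ} (f : Fin k → ZMod N → ℝ) (n' : ZMod N) :
    ∑ r : ZMod N, (∏ i, dftZMod N (f i) r) * chi N (-(n' * r))
      = (N : ℂ) * ((∑ x ∈ Finset.univ.filter (fun x : Fin k → ZMod N => ∑ i, x i = n'),
          ∏ i, f i (x i) : ℝ) : ℂ) := by
  have step1 : ∀ r : ZMod N, (∏ i, dftZMod N (f i) r)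
      = ∑ x : Fin k → ZMod N, ∏ i, ((f i (x i) : ℂ) * chi N (x i * r)) := by
    intro r
    simp only [dft_eq]
    rw [Finset.prod_univ_sum]
    rw [Fintype.piFinset_univ]
  calc ∑ r : ZMod N, (∏ i, dftZMod N (f i) r) * chi N (-(n' * r))
      = ∑ r : ZMod N, ∑ x : Fin k → ZMod N,
          (∏ i, ((f i (x i) : ℂ) * chi N (x i * r))) * chi N (-(n' * r)) := by
        apply Finset.sum_congr rfl; intro r _
        rw [step1, Finset.sum_mul]
    _ = ∑ x : Fin k → ZMod N, ∑ r : ZMod N,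
          (∏ i, (f i (x i) : ℂ)) * chi N (r * ((∑ i, x i) - n')) := by
        rw [Finset.sum_comm]
        apply Finset.sum_congr rfl; intro x _
        apply Finset.sum_congr rfl; intro r _
        rw [Finset.prod_mul_distrib, ← chi_sum]
        have h1 : (∑ i, x i * r) = (∑ i, x i) * r := by rw [Finset.sum_mul]
        rw [h1, mul_assoc, ← chi_add]
        congr 2
        ring
    _ = ∑ x : Fin k → ZMod N,
          (∏ i, (f i (x i) : ℂ)) * (if (∑ i, x i) = n' then (N : ℂ) else 0) := by
        apply Finset.sum_congr rfl; intro x _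
        rw [← Finset.mul_sum]
        congr 1
        have := sum_chi N ((∑ i, x i) - n')
        rw [this]
        congr 1
        simp [sub_eq_zero]
    _ = ∑ x ∈ Finset.univ.filter (fun x : Fin k → ZMod N => ∑ i, x i = n'),
          (∏ i, (f i (x i) : ℂ)) * (N : ℂ) := by
        rw [Finset.sum_filter]
        apply Finset.sum_congr rfl; intro x _
        rw [mul_ite, mul_zero]
    _ = (N : ℂ) * ((∑ x ∈ Finset.univ.filter (fun x : Fin k → ZMod N => ∑ i, x i = n'),
          ∏ i, f i (x i) : ℝ) : ℂ) := by
        push_cast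
        rw [← Finset.sum_mul]
        ring

lemma distNearestInt_nonneg (t : ℝ) : 0 ≤ distNearestInt t := abs_nonneg _

lemma distNearestInt_add_int (t : ℝ) (n : ℤ) : distNearestInt (t + n) = distNearestInt t := by
  unfold distNearestInt
  rw [round_add_intCast]
  push_cast
  ring_nf

lemma distNearestInt_neg (t : ℝ) : distNearestInt (-t) = distNearestInt t := by
  unfold distNearestInt
  apply le_antisymm
  · calc |(-t) - round (-t)| ≤ |(-t) - ((-(round t) : ℤ) : ℝ)| := round_le _ _
      _ = |t - round t| := by push_cast; rw [← abs_neg]; ring_nf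
  · calc |t - round t| ≤ |t - ((-(round (-t)) : ℤ) : ℝ)| := round_le _ _
      _ = |(-t) - round (-t)| := by push_cast; rw [← abs_neg]; ring_nf

lemma zero_mem_bohrSet {δ ε : ℝ} (hε : 0 ≤ ε) (f : ZMod N → ℝ) :
    (0 : ZMod N) ∈ bohrSet N δ ε f := by
  intro r _
  simp only [ZMod.val_zero, Nat.zero_mul, Nat.cast_zero, zero_div]
  unfold distNearestInt
  simp [hε]

lemma neg_mem_bohrSet {δ ε : ℝ} {f : ZMod N → ℝ} {x : ZMod N}
    (hx : x ∈ bohrSet N δ ε f) : -x ∈ bohrSet N δ ε f := by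
  intro r hr
  have h := hx r hr
  by_cases h0 : x = 0
  · subst h0; simpa using h
  · have hval : (-x).val = N - x.val := by rw [ZMod.neg_val]; simp [h0]
    have hle : x.val ≤ N := le_of_lt x.val_lt
    have hN : (N : ℝ) ≠ 0 := Nat.cast_ne_zero.mpr (NeZero.ne N)
    have hcast : (((-x).val * r.val : ℕ) : ℝ) / (N : ℝ)
        = (-((((x.val * r.val : ℕ) : ℝ)) / (N : ℝ))) + ((r.val : ℤ) : ℝ) := by
      rw [hval, Nat.sub_mul, Nat.cast_sub (Nat.mul_le_mul_right _ hle)]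
      push_cast [-ZMod.natCast_val]
      field_simp
      ring
    rw [hcast, distNearestInt_add_int, distNearestInt_neg]
    exact h

lemma bohrSet_card_pos {δ ε : ℝ} (hε : 0 ≤ ε) (f : ZMod N → ℝ) :
    0 < Nat.card (bohrSet N δ ε f) := by
  have hne : (bohrSet N δ ε f).Nonempty := ⟨0, zero_mem_bohrSet N hε f⟩
  haveI := hne.to_subtype
  exact Nat.card_pos

lemma bohrMeasure_nonneg {δ ε : ℝ} (f : ZMod N → ℝ) (x : ZMod N) :
    0 ≤ bohrMeasure N δ ε f x := by
  unfold bohrMeasure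
  split_ifs
  · positivity
  · exact le_refl _

lemma sum_bohrMeasure {δ ε : ℝ} (hε : 0 ≤ ε) (f : ZMod N → ℝ) :
    ∑ x : ZMod N, bohrMeasure N δ ε f x = 1 := by
  unfold bohrMeasure
  have h1 : (∑ x : ZMod N, if x ∈ bohrSet N δ ε f then ((Nat.card (bohrSet N δ ε f) : ℝ))⁻¹ else 0)
      = ∑ x ∈ Finset.univ.filter (· ∈ bohrSet N δ ε f),
          ((Nat.card (bohrSet N δ ε f) : ℝ))⁻¹ := (Finset.sum_filter _ _).symm
  have hpos : 0 < Nat.card (bohrSet N δ ε f) := bohrSet_card_pos N hε f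
  have hcard : (Finset.univ.filter (· ∈ bohrSet N δ ε f)).card = Nat.card (bohrSet N δ ε f) := by
    rw [Set.filter_mem_univ_eq_toFinset, ← Set.ncard_eq_toFinset_card', ← Nat.card_coe_set_eq]
  rw [h1, Finset.sum_const, nsmul_eq_mul, hcard]
  exact mul_inv_cancel₀ (Nat.cast_ne_zero.mpr hpos.ne')

lemma abs_dft_le (g : ZMod N → ℝ) (hg : ∀ x, 0 ≤ g x) (r : ZMod N) :
    ‖dftZMod N g r‖ ≤ ∑ x : ZMod N, g x := by
  rw [dft_eq]
  refine le_trans (norm_sum_le _ _) ?_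
  apply le_of_eq
  apply Finset.sum_congr rfl
  intro x _
  rw [norm_mul, abs_chi, mul_one, Complex.norm_real, Real.norm_eq_abs, abs_of_nonneg (hg x)]

lemma dft_bohrMeasure_real {δ ε : ℝ} (hε0 : 0 ≤ ε) (f : ZMod N → ℝ) {r : ZMod N}
    (hr : r ∈ fourierLevelSet N δ f) :
    ∃ c : ℝ, dftZMod N (bohrMeasure N δ ε f) r = (c : ℂ) ∧
      1 - 2 * Real.pi ^ 2 * ε ^ 2 ≤ c ∧ c ≤ 1 := by
  set β := bohrMeasure N δ ε f with hβ
  set t : ZMod N → ℝ := fun x => ((x.val * r.val : ℕ) : ℝ) / (N : ℝ) with ht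
  have hterm : ∀ (b u : ℝ), (b : ℂ) * Complex.exp (-(2 * Real.pi * Complex.I * (u : ℂ)))
      = ((b * Real.cos (2 * Real.pi * u) : ℝ) : ℂ)
        - ((b * Real.sin (2 * Real.pi * u) : ℝ) : ℂ) * Complex.I := by
    intro b u
    have h : (-(2 * (Real.pi : ℂ) * Complex.I * (u : ℂ))) = ((-(2 * Real.pi * u) : ℝ) : ℂ) * Complex.I := by
      push_cast; ring
    rw [h, Complex.exp_mul_I, ← Complex.ofReal_cos, ← Complex.ofReal_sin,
      Real.cos_neg, Real.sin_neg]
    push_cast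
    ring
  set C := ∑ x : ZMod N, β x * Real.cos (2 * Real.pi * t x) with hC
  set S := ∑ x : ZMod N, β x * Real.sin (2 * Real.pi * t x) with hS
  have hdft : dftZMod N β r = (C : ℂ) - (S : ℂ) * Complex.I := by
    unfold dftZMod
    have hstep : ∀ x : ZMod N, x ∈ Finset.univ → (bohrMeasure N δ ε f x : ℂ) *
        Complex.exp (-(2 * Real.pi * Complex.I * (((x.val * r.val : ℕ) : ℝ) / (N : ℝ))))
        = ((β x * Real.cos (2 * Real.pi * t x) : ℝ) : ℂ)
          - ((β x * Real.sin (2 * Real.pi * t x) : ℝ) : ℂ) * Complex.I := by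
      intro x _
      rw [← hterm (β x) (t x), hβ]
      congr 2
      rw [ht]
      push_cast
      ring
    rw [Finset.sum_congr rfl hstep, Finset.sum_sub_distrib, ← Finset.sum_mul,
      hC, hS]
    push_cast
    ring
  -- the imaginary part vanishes by symmetry
  have hmem : ∀ x : ZMod N, (-x ∈ bohrSet N δ ε f) ↔ (x ∈ bohrSet N δ ε f) :=
    fun x => ⟨fun h => by simpa using neg_mem_bohrSet N h, neg_mem_bohrSet N⟩
  have hβneg : ∀ x : ZMod N, β (-x) = β x := by
    intro x
    rw [hβ]
    unfold bohrMeasure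
    simp only [hmem x]
  have hkey : ∀ x : ZMod N, β (-x) * Real.sin (2 * Real.pi * t (-x))
      = -(β x * Real.sin (2 * Real.pi * t x)) := by
    intro x
    by_cases h0 : x = 0
    · subst h0
      simp only [neg_zero]
      have : t 0 = 0 := by simp [ht, ZMod.val_zero]
      rw [this]
      simp
    · have hval : (-x).val = N - x.val := by rw [ZMod.neg_val]; simp [h0]
      have hle : x.val ≤ N := le_of_lt x.val_lt
      have hN : (N : ℝ) ≠ 0 := Nat.cast_ne_zero.mpr (NeZero.ne N)
      have ht' : 2 * Real.pi * t (-x) = -(2 * Real.pi * t x) + ((r.val : ℤ) : ℝ) * (2 * Real.pi) := by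
        rw [ht]
        simp only
        rw [hval, Nat.sub_mul, Nat.cast_sub (Nat.mul_le_mul_right _ hle)]
        push_cast [-ZMod.natCast_val]
        field_simp
        ring
      rw [hβneg, ht', Real.sin_add_int_mul_two_pi, Real.sin_neg]
      ring
  have hSzero : S = 0 := by
    have h2 : ∑ x : ZMod N, β (-x) * Real.sin (2 * Real.pi * t (-x)) = S :=
      Fintype.sum_equiv (Equiv.neg (ZMod N)) _ _ (fun x => rfl)
    have h3 : ∑ x : ZMod N, β (-x) * Real.sin (2 * Real.pi * t (-x)) = -S := by
      rw [hS, ← Finset.sum_neg_distrib]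
      exact Finset.sum_congr rfl (fun x _ => hkey x)
    have := h2.symm.trans h3
    linarith
  refine ⟨C, by rw [hdft, hSzero]; push_cast; ring, ?_, ?_⟩
  · -- 1 - 2π²ε² ≤ C
    have hsum : ∑ x : ZMod N, β x = 1 := sum_bohrMeasure N hε0 f
    have hbd : ∀ x : ZMod N, β x * (1 - Real.cos (2 * Real.pi * t x)) ≤ β x * (2 * Real.pi ^ 2 * ε ^ 2) := by
      intro x
      by_cases hx : x ∈ bohrSet N δ ε f
      · apply mul_le_mul_of_nonneg_left _ (bohrMeasure_nonneg N f x)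
        have hd : distNearestInt (t x) ≤ ε := hx r hr
        set d := t x - round (t x) with hdd
        have habs : |d| ≤ ε := hd
        have hcos : Real.cos (2 * Real.pi * t x) = Real.cos (2 * Real.pi * d) := by
          have : 2 * Real.pi * t x = 2 * Real.pi * d + (round (t x) : ℤ) * (2 * Real.pi) := by
            rw [hdd]; push_cast; ring
          rw [this, Real.cos_add_int_mul_two_pi]
        have hineq := Real.one_sub_sq_div_two_le_cos (x := 2 * Real.pi * d)
        have hd2 : d ^ 2 ≤ ε ^ 2 := by
          rw [← sq_abs]
          exact pow_le_pow_left₀ (abs_nonneg d) habs 2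
        have hπd : Real.pi ^ 2 * d ^ 2 ≤ Real.pi ^ 2 * ε ^ 2 :=
          mul_le_mul_of_nonneg_left hd2 (sq_nonneg Real.pi)
        have hexp : (2 * Real.pi * d) ^ 2 / 2 = 2 * (Real.pi ^ 2 * d ^ 2) := by ring
        rw [hcos]
        clear_value d
        linarith
      · have : β x = 0 := by rw [hβ]; unfold bohrMeasure; simp [hx]
        rw [this]; simp
    have h1C : 1 - C = ∑ x : ZMod N, β x * (1 - Real.cos (2 * Real.pi * t x)) := by
      have e1 : ∑ x : ZMod N, β x * (1 - Real.cos (2 * Real.pi * t x))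
          = (∑ x : ZMod N, β x) - ∑ x : ZMod N, β x * Real.cos (2 * Real.pi * t x) := by
        rw [← Finset.sum_sub_distrib]
        apply Finset.sum_congr rfl
        intro x _; ring
      rw [e1, hsum, ← hC]
    have h2C : ∑ x : ZMod N, β x * (1 - Real.cos (2 * Real.pi * t x))
        ≤ ∑ x : ZMod N, β x * (2 * Real.pi ^ 2 * ε ^ 2) := Finset.sum_le_sum (fun x _ => hbd x)
    rw [← Finset.sum_mul, hsum, one_mul] at h2C
    linarith [h1C ▸ h2C]
  · -- C ≤ 1
    have hsum : ∑ x : ZMod N, β x = 1 := sum_bohrMeasure N hε0 f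
    calc C ≤ ∑ x : ZMod N, β x * 1 := by
          apply Finset.sum_le_sum
          intro x _
          exact mul_le_mul_of_nonneg_left (Real.cos_le_one _) (bohrMeasure_nonneg N f x)
      _ = 1 := by simp only [mul_one]; exact hsum

lemma dft_smoothed (δ ε : ℝ) (a : ZMod N → ℝ) (r : ZMod N) :
    dftZMod N (smoothed N δ ε a) r
      = dftZMod N a r * (dftZMod N (bohrMeasure N δ ε a) r) ^ 2 := by
  unfold smoothed
  rw [dft_conv, dft_conv]
  ring

lemma abs_prod_sub_one {ι : Type*} (s : Finset ι) (z : ι → ℂ)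
    (hz : ∀ i ∈ s, ‖z i‖ ≤ 1) :
    ‖∏ i ∈ s, z i - 1‖ ≤ ∑ i ∈ s, ‖z i - 1‖ := by
  classical
  induction s using Finset.induction_on with
  | empty => simp
  | @insert a s ha ih =>
    rw [Finset.prod_insert ha, Finset.sum_insert ha]
    have habs : ‖∏ i ∈ s, z i‖ ≤ 1 := by
      rw [norm_prod]
      exact Finset.prod_le_one (fun i _ => norm_nonneg _)
        (fun i hi => hz i (Finset.mem_insert_of_mem hi))
    calc ‖z a * ∏ i ∈ s, z i - 1‖
        ≤ ‖z a * ∏ i ∈ s, z i - ∏ i ∈ s, z i‖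
            + ‖∏ i ∈ s, z i - 1‖ := by
          have := norm_sub_le_norm_sub_add_norm_sub (z a * ∏ i ∈ s, z i) (∏ i ∈ s, z i) 1
          simpa using this
      _ ≤ ‖z a - 1‖ + ∑ i ∈ s, ‖z i - 1‖ := by
          gcongr
          · have : z a * ∏ i ∈ s, z i - ∏ i ∈ s, z i = (z a - 1) * ∏ i ∈ s, z i := by ring
            rw [this, norm_mul]
            calc ‖z a - 1‖ * ‖∏ i ∈ s, z i‖
                ≤ ‖z a - 1‖ * 1 :=
                  mul_le_mul_of_nonneg_left habs (norm_nonneg _)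
              _ = ‖z a - 1‖ := mul_one _
          · exact ih (fun i hi => hz i (Finset.mem_insert_of_mem hi))

/-- The AM-GM step: if one factor is at most `δ`, the product is small. -/
lemma prod_small {k : ℕ} (hk : 4 ≤ k) {δ : ℝ} (hδ : 0 < δ) (hδ1 : δ ≤ 1)
    (v : Fin k → ℝ) (hv : ∀ i, 0 ≤ v i) (i₀ : Fin k) (h0 : v i₀ ≤ δ) :
    ∏ i, v i ≤ δ ^ ((1 : ℝ) / ((k : ℝ) + 1)) *
      (((k : ℝ) + 1) / (k : ℝ) ^ 2 * ∑ i, v i ^ (((k : ℝ) ^ 2) / ((k : ℝ) + 1))) := by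
  have hkR : (4 : ℝ) ≤ (k : ℝ) := by exact_mod_cast hk
  have hk0 : (0 : ℝ) < (k : ℝ) := by linarith
  have hk1 : (0 : ℝ) < (k : ℝ) + 1 := by linarith
  set p : ℝ := ((k : ℝ) ^ 2) / ((k : ℝ) + 1) with hp
  have hppos : 0 < p := by positivity
  have hRHSfac : 0 ≤ ((k : ℝ) + 1) / (k : ℝ) ^ 2 * ∑ i, v i ^ p := by
    apply mul_nonneg (by positivity)
    exact Finset.sum_nonneg (fun i _ => Real.rpow_nonneg (hv i) p)
  by_cases hz : v i₀ = 0
  · have : ∏ i, v i = 0 := Finset.prod_eq_zero (Finset.mem_univ i₀) hz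
    rw [this]
    positivity
  · have hv0 : 0 < v i₀ := lt_of_le_of_ne (hv i₀) (Ne.symm hz)
    -- weights
    set w : Fin k → ℝ := fun i => if i = i₀ then 1 / (k : ℝ) ^ 2 else ((k : ℝ) + 1) / (k : ℝ) ^ 2 with hw
    have hwpos : ∀ i, 0 ≤ w i := by
      intro i; rw [hw]; dsimp only; split_ifs <;> positivity
    have hwsum : ∑ i, w i = 1 := by
      have hrw : ∀ i : Fin k, w i = ((k : ℝ) + 1) / (k : ℝ) ^ 2
          - (if i = i₀ then (k : ℝ) / (k : ℝ) ^ 2 else 0) := by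
        intro i; rw [hw]; dsimp only; split_ifs with h
        · field_simp; ring
        · ring
      rw [Finset.sum_congr rfl (fun i _ => hrw i), Finset.sum_sub_distrib,
        Finset.sum_const, Finset.sum_ite_eq' Finset.univ i₀, if_pos (Finset.mem_univ i₀),
        Finset.card_univ, Fintype.card_fin, nsmul_eq_mul]
      field_simp
      ring
    have hgm := Real.geom_mean_le_arith_mean_weighted Finset.univ w (fun i => v i ^ p)
      (fun i _ => hwpos i) hwsum (fun i _ => Real.rpow_nonneg (hv i) p)
    have hsplit : v i₀ = v i₀ ^ ((k : ℝ) / ((k : ℝ) + 1)) * v i₀ ^ ((1 : ℝ) / ((k : ℝ) + 1)) := by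
      rw [← Real.rpow_add hv0]
      rw [show (k : ℝ) / ((k : ℝ) + 1) + 1 / ((k : ℝ) + 1) = 1 by field_simp]
      exact (Real.rpow_one _).symm
    have claimA : ∏ i, ((fun i => v i ^ p) i) ^ w i
        = v i₀ ^ ((1 : ℝ) / ((k : ℝ) + 1)) * ∏ i ∈ Finset.univ.erase i₀, v i := by
      have hzw : ∀ i : Fin k, ((v i) ^ p) ^ w i = v i ^ (p * w i) :=
        fun i => (Real.rpow_mul (hv i) p (w i)).symm
      rw [Finset.prod_congr rfl (fun i _ => hzw i)]
      rw [← Finset.mul_prod_erase Finset.univ (fun i => v i ^ (p * w i)) (Finset.mem_univ i₀)]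
      congr 1
      · have hwi : w i₀ = 1 / (k : ℝ) ^ 2 := by rw [hw]; simp
        rw [hwi, hp]
        congr 1
        field_simp
      · apply Finset.prod_congr rfl
        intro i hi
        have hne : i ≠ i₀ := (Finset.mem_erase.mp hi).1
        have hwi : w i = ((k : ℝ) + 1) / (k : ℝ) ^ 2 := by rw [hw]; simp [hne]
        rw [hwi, hp]
        rw [show (k : ℝ) ^ 2 / ((k : ℝ) + 1) * (((k : ℝ) + 1) / (k : ℝ) ^ 2) = 1 by field_simp]
        exact Real.rpow_one _
    have claimB : ∑ i, w i * v i ^ p ≤ ((k : ℝ) + 1) / (k : ℝ) ^ 2 * ∑ i, v i ^ p := by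
      rw [Finset.mul_sum]
      apply Finset.sum_le_sum
      intro i _
      apply mul_le_mul_of_nonneg_right _ (Real.rpow_nonneg (hv i) p)
      rw [hw]; dsimp only; split_ifs
      · apply div_le_div_of_nonneg_right (by linarith) (by positivity)
      · exact le_refl _
    calc ∏ i, v i = v i₀ * ∏ i ∈ Finset.univ.erase i₀, v i :=
          (Finset.mul_prod_erase Finset.univ v (Finset.mem_univ i₀)).symm
      _ = v i₀ ^ ((k : ℝ) / ((k : ℝ) + 1))
            * (v i₀ ^ ((1 : ℝ) / ((k : ℝ) + 1)) * ∏ i ∈ Finset.univ.erase i₀, v i) := by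
          rw [← mul_assoc, ← hsplit]
      _ ≤ δ ^ ((k : ℝ) / ((k : ℝ) + 1))
            * (((k : ℝ) + 1) / (k : ℝ) ^ 2 * ∑ i, v i ^ p) := by
          apply mul_le_mul
          · exact Real.rpow_le_rpow (hv i₀) h0 (by positivity)
          · rw [← claimA]
            exact hgm.trans claimB
          · rw [← claimA]
            exact Finset.prod_nonneg (fun i _ => Real.rpow_nonneg (Real.rpow_nonneg (hv i) p) _)
          · exact Real.rpow_nonneg hδ.le _
      _ ≤ δ ^ ((1 : ℝ) / ((k : ℝ) + 1))
            * (((k : ℝ) + 1) / (k : ℝ) ^ 2 * ∑ i, v i ^ p) := by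
          apply mul_le_mul_of_nonneg_right _ hRHSfac
          apply Real.rpow_le_rpow_of_exponent_ge hδ hδ1
          rw [div_le_div_iff₀ hk1 hk1]
          nlinarith

end Transfer

open Transfer

set_option maxHeartbeats 1000000

/-- **Transference estimate (Lemma `l:aa'`).** For `k ≥ 4` there is a constant `K`
depending only on `k` such that: for every `N`, `δ, ε ∈ (0,1)`, nonnegative functions
`a_1, …, a_k : ℤ/Nℤ → ℝ` of total mass at most `1`, and constants `D₁, D₂ > 0` with
`|R_i| ≤ D₁ δ^{−5/2}` and `∑_r |ã_i(r)|^{k²/(k+1)} ≤ D₂`, the smoothed and the original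
`k`-fold convolutions at any `n'` differ by at most
`K (D₁ ε² δ^{−5/2} + D₂ δ^{1/(k+1)}) / N`. -/
theorem transference_estimate (k : ℕ) (hk : 4 ≤ k) :
    ∃ K : ℝ, 0 < K ∧
      ∀ (N : ℕ) [NeZero N], ∀ δ ε : ℝ,
        δ ∈ Set.Ioo (0 : ℝ) 1 → ε ∈ Set.Ioo (0 : ℝ) 1 →
        ∀ a : Fin k → ZMod N → ℝ,
          (∀ i x, 0 ≤ a i x) →
          (∀ i, ∑ x : ZMod N, a i x ≤ 1) →
        ∀ D₁ D₂ : ℝ, 0 < D₁ → 0 < D₂ →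
          (∀ i, (Nat.card (fourierLevelSet N δ (a i)) : ℝ) ≤ D₁ * δ ^ (-(5 : ℝ) / 2)) →
          (∀ i, ∑ r : ZMod N,
              ‖dftZMod N (a i) r‖ ^ (((k : ℝ) ^ 2) / ((k : ℝ) + 1)) ≤ D₂) →
        ∀ n' : ZMod N,
          |(∑ x ∈ Finset.univ.filter (fun x : Fin k → ZMod N => ∑ i, x i = n'),
              ∏ i, smoothed N δ ε (a i) (x i)) -
            (∑ x ∈ Finset.univ.filter (fun x : Fin k → ZMod N => ∑ i, x i = n'),
              ∏ i, a i (x i))| ≤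
          K * (D₁ * ε ^ 2 * δ ^ (-(5 : ℝ) / 2) + D₂ * δ ^ ((1 : ℝ) / ((k : ℝ) + 1))) / N := by
  have hk0 : 0 < k := by omega
  refine ⟨40 * k, by positivity, ?_⟩
  intro N _ δ ε hδ hε a ha hmass D₁ D₂ hD₁ hD₂ hR hF n'
  have hNpos : 0 < (N : ℝ) := by
    have := NeZero.ne N
    positivity
  have hkR : (4 : ℝ) ≤ (k : ℝ) := by exact_mod_cast hk
  set p : ℝ := ((k : ℝ) ^ 2) / ((k : ℝ) + 1) with hp
  set S' : ℝ := ∑ x ∈ Finset.univ.filter (fun x : Fin k → ZMod N => ∑ i, x i = n'),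
      ∏ i, smoothed N δ ε (a i) (x i) with hS'
  set S : ℝ := ∑ x ∈ Finset.univ.filter (fun x : Fin k → ZMod N => ∑ i, x i = n'),
      ∏ i, a i (x i) with hS
  set F : Fin k → ZMod N → ℂ := fun i r => dftZMod N (a i) r with hFdef
  set B : Fin k → ZMod N → ℂ := fun i r => dftZMod N (bohrMeasure N δ ε (a i)) r with hBdef
  set diff : ZMod N → ℂ := fun r =>
    (∏ i, dftZMod N (smoothed N δ ε (a i)) r) - (∏ i, dftZMod N (a i) r) with hdiffdef
  have hinv1 := inversion N (fun i => smoothed N δ ε (a i)) n'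
  have hinv2 := inversion N a n'
  have hdiffsum : (N : ℂ) * ((S' - S : ℝ) : ℂ) = ∑ r : ZMod N, diff r * chi N (-(n' * r)) := by
    have : ∀ r : ZMod N, diff r * chi N (-(n' * r))
        = (∏ i, dftZMod N (smoothed N δ ε (a i)) r) * chi N (-(n' * r))
          - (∏ i, dftZMod N (a i) r) * chi N (-(n' * r)) := by
      intro r; rw [hdiffdef]; ring
    rw [Finset.sum_congr rfl (fun r _ => this r), Finset.sum_sub_distrib, hinv1, hinv2,
      hS', hS]
    push_cast
    ring
  have habsmain : (N : ℝ) * |S' - S| ≤ ∑ r : ZMod N, ‖diff r‖ := by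
    have h1 : (N : ℝ) * |S' - S| = ‖(N : ℂ) * ((S' - S : ℝ) : ℂ)‖ := by
      rw [norm_mul, Complex.norm_natCast, Complex.norm_real, Real.norm_eq_abs]
    rw [h1, hdiffsum]
    refine le_trans (norm_sum_le _ _) ?_
    apply le_of_eq
    apply Finset.sum_congr rfl
    intro r _
    rw [norm_mul, abs_chi, mul_one]
  -- basic bounds
  have habsF : ∀ i r, ‖F i r‖ ≤ 1 := by
    intro i r
    exact le_trans (abs_dft_le N (a i) (ha i) r) (hmass i)
  have habsB : ∀ i r, ‖B i r‖ ≤ 1 := by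
    intro i r
    refine le_trans (abs_dft_le N _ (bohrMeasure_nonneg N (a i)) r) ?_
    rw [sum_bohrMeasure N hε.1.le (a i)]
  have hGeq : ∀ i r, dftZMod N (smoothed N δ ε (a i)) r = F i r * (B i r) ^ 2 :=
    fun i r => dft_smoothed N δ ε (a i) r
  set T : Finset (ZMod N) := Finset.univ.filter
    (fun r => ∀ i, r ∈ fourierLevelSet N δ (a i)) with hT
  -- bound on T
  have hbdT : ∀ r ∈ T, ‖diff r‖ ≤ (k : ℝ) * (4 * Real.pi ^ 2 * ε ^ 2) := by
    intro r hr
    have hrT : ∀ i, r ∈ fourierLevelSet N δ (a i) := (Finset.mem_filter.mp hr).2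
    have heq : diff r = (∏ i, F i r) * ((∏ i, (B i r) ^ 2) - 1) := by
      rw [hdiffdef]
      simp only [hGeq]
      rw [Finset.prod_mul_distrib]
      ring
    rw [heq, norm_mul]
    have h1 : ‖∏ i, F i r‖ ≤ 1 := by
      rw [norm_prod]
      exact Finset.prod_le_one (fun i _ => norm_nonneg _) (fun i _ => habsF i r)
    have h2 : ‖(∏ i, (B i r) ^ 2) - 1‖ ≤ (k : ℝ) * (4 * Real.pi ^ 2 * ε ^ 2) := by
      refine le_trans (abs_prod_sub_one Finset.univ _ ?_) ?_
      · intro i _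
        rw [norm_pow]
        exact pow_le_one₀ (norm_nonneg _) (habsB i r)
      · have hbound : ∀ i : Fin k, ‖(B i r) ^ 2 - 1‖ ≤ 4 * Real.pi ^ 2 * ε ^ 2 := by
          intro i
          obtain ⟨c, hc, hc1, hc2⟩ := dft_bohrMeasure_real N hε.1.le (a i) (hrT i)
          have hcabs : |c| ≤ 1 := by
            have := habsB i r
            rw [hBdef] at this
            simp only at this
            rw [hc, Complex.norm_real, Real.norm_eq_abs] at this
            exact this
          have hceq : (B i r) ^ 2 - 1 = ((c ^ 2 - 1 : ℝ) : ℂ) := by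
            rw [hBdef]
            simp only
            rw [hc]
            push_cast
            ring
          rw [hceq, Complex.norm_real, Real.norm_eq_abs]
          have hcm1 : -1 ≤ c := neg_le_of_abs_le hcabs
          have hcp1 : c ≤ 1 := le_of_abs_le hcabs
          rw [abs_le]
          constructor
          · nlinarith [Real.pi_pos, sq_nonneg ε]
          · nlinarith [sq_nonneg c, Real.pi_pos, sq_nonneg ε]
        calc ∑ i : Fin k, ‖(B i r) ^ 2 - 1‖
            ≤ ∑ _i : Fin k, (4 * Real.pi ^ 2 * ε ^ 2) := Finset.sum_le_sum (fun i _ => hbound i)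
          _ = (k : ℝ) * (4 * Real.pi ^ 2 * ε ^ 2) := by
              rw [Finset.sum_const, Finset.card_univ, Fintype.card_fin, nsmul_eq_mul]
    calc ‖∏ i, F i r‖ * ‖(∏ i, (B i r) ^ 2) - 1‖
        ≤ 1 * ((k : ℝ) * (4 * Real.pi ^ 2 * ε ^ 2)) := by
          apply mul_le_mul h1 h2 (norm_nonneg _) zero_le_one
      _ = (k : ℝ) * (4 * Real.pi ^ 2 * ε ^ 2) := one_mul _

  set X : ℝ := δ ^ (-(5 : ℝ) / 2) with hX
  set Y : ℝ := δ ^ ((1 : ℝ) / ((k : ℝ) + 1)) with hY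
  have hXnn : 0 ≤ X := Real.rpow_nonneg hδ.1.le _
  have hYnn : 0 ≤ Y := Real.rpow_nonneg hδ.1.le _
  have hk0' : (0 : ℝ) < (k : ℝ) := by linarith
  -- bound off T
  set Tc : Finset (ZMod N) := Finset.univ.filter
    (fun r => ¬ (∀ i, r ∈ fourierLevelSet N δ (a i))) with hTc
  have hbdTc : ∀ r ∈ Tc,
      ‖diff r‖ ≤ 2 * (Y * ((((k : ℝ) + 1) / (k : ℝ) ^ 2) * ∑ i, ‖F i r‖ ^ p)) := by
    intro r hr
    obtain ⟨i₀, hi₀⟩ : ∃ i, r ∉ fourierLevelSet N δ (a i) := by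
      have h := (Finset.mem_filter.mp hr).2
      push_neg at h
      exact h
    have hsmall : ‖F i₀ r‖ ≤ δ := by
      have h : ¬ (δ ≤ ‖dftZMod N (a i₀) r‖) := hi₀
      push_neg at h
      exact h.le
    have habsdiff : ‖diff r‖ ≤ 2 * ∏ i, ‖F i r‖ := by
      have htri : ‖diff r‖
          ≤ ‖∏ i, dftZMod N (smoothed N δ ε (a i)) r‖
            + ‖∏ i, dftZMod N (a i) r‖ := by
        rw [hdiffdef]
        simpa using norm_sub_le_norm_sub_add_norm_sub (∏ i, dftZMod N (smoothed N δ ε (a i)) r) 0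
          (∏ i, dftZMod N (a i) r)
      have hG : ‖∏ i, dftZMod N (smoothed N δ ε (a i)) r‖
          ≤ ∏ i, ‖F i r‖ := by
        rw [norm_prod]
        apply Finset.prod_le_prod (fun i _ => norm_nonneg _)
        intro i _
        rw [hGeq i r, norm_mul, norm_pow]
        calc ‖F i r‖ * ‖B i r‖ ^ 2
            ≤ ‖F i r‖ * 1 := by
              apply mul_le_mul_of_nonneg_left _ (norm_nonneg _)
              exact pow_le_one₀ (norm_nonneg _) (habsB i r)
          _ = ‖F i r‖ := mul_one _
      have hFp : ‖∏ i, dftZMod N (a i) r‖ = ∏ i, ‖F i r‖ := by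
        rw [norm_prod]
      linarith
    have hprod := prod_small hk hδ.1 hδ.2.le (fun i => ‖F i r‖)
      (fun i => norm_nonneg _) i₀ hsmall
    rw [← hY, ← hp] at hprod
    have hprod' : ∏ i, ‖F i r‖
        ≤ Y * ((((k : ℝ) + 1) / (k : ℝ) ^ 2) * ∑ i, ‖F i r‖ ^ p) := hprod
    linarith
  -- card of T
  have hTcard : (T.card : ℝ) ≤ D₁ * X := by
    have hsub : T ⊆ (fourierLevelSet N δ (a ⟨0, hk0⟩)).toFinset := by
      intro r hr
      rw [Set.mem_toFinset]
      exact (Finset.mem_filter.mp hr).2 ⟨0, hk0⟩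
    have h1 : (T.card : ℝ) ≤ ((fourierLevelSet N δ (a ⟨0, hk0⟩)).toFinset.card : ℝ) := by
      exact_mod_cast Finset.card_le_card hsub
    have h2 : Nat.card (fourierLevelSet N δ (a ⟨0, hk0⟩))
        = (fourierLevelSet N δ (a ⟨0, hk0⟩)).toFinset.card :=
      (Nat.card_coe_set_eq _).trans (Set.ncard_eq_toFinset_card' _)
    have := hR ⟨0, hk0⟩
    rw [h2] at this
    linarith
  -- sum over T
  have hsumT : ∑ r ∈ T, ‖diff r‖ ≤ (D₁ * X) * ((k : ℝ) * (4 * Real.pi ^ 2 * ε ^ 2)) := by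
    calc ∑ r ∈ T, ‖diff r‖ ≤ T.card • ((k : ℝ) * (4 * Real.pi ^ 2 * ε ^ 2)) :=
          Finset.sum_le_card_nsmul T _ _ hbdT
      _ = (T.card : ℝ) * ((k : ℝ) * (4 * Real.pi ^ 2 * ε ^ 2)) := nsmul_eq_mul _ _
      _ ≤ (D₁ * X) * ((k : ℝ) * (4 * Real.pi ^ 2 * ε ^ 2)) := by
          apply mul_le_mul_of_nonneg_right hTcard
          apply mul_nonneg hk0'.le
          positivity
  -- sum off T
  have hsumTc : ∑ r ∈ Tc, ‖diff r‖
      ≤ (2 * Y * (((k : ℝ) + 1) / (k : ℝ) ^ 2)) * ((k : ℝ) * D₂) := by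
    have h2a : ∑ r ∈ Tc, ‖diff r‖
        ≤ ∑ r ∈ Tc, 2 * (Y * ((((k : ℝ) + 1) / (k : ℝ) ^ 2) * ∑ i, ‖F i r‖ ^ p)) :=
      Finset.sum_le_sum hbdTc
    have h2b : ∑ r ∈ Tc, 2 * (Y * ((((k : ℝ) + 1) / (k : ℝ) ^ 2) * ∑ i, ‖F i r‖ ^ p))
        = (2 * Y * (((k : ℝ) + 1) / (k : ℝ) ^ 2)) * ∑ r ∈ Tc, ∑ i, ‖F i r‖ ^ p := by
      rw [Finset.mul_sum]
      apply Finset.sum_congr rfl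
      intro r _
      ring
    have h2c : ∑ r ∈ Tc, ∑ i, ‖F i r‖ ^ p ≤ (k : ℝ) * D₂ := by
      have hstep1 : ∑ r ∈ Tc, ∑ i, ‖F i r‖ ^ p
          ≤ ∑ r : ZMod N, ∑ i, ‖F i r‖ ^ p := by
        apply Finset.sum_le_sum_of_subset_of_nonneg (Finset.filter_subset _ _)
        intro r _ _
        exact Finset.sum_nonneg (fun i _ => Real.rpow_nonneg (norm_nonneg _) _)
      have hstep2 : ∑ r : ZMod N, ∑ i, ‖F i r‖ ^ p
          = ∑ i, ∑ r : ZMod N, ‖F i r‖ ^ p := Finset.sum_comm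
      have hstep3 : ∑ i : Fin k, ∑ r : ZMod N, ‖F i r‖ ^ p ≤ ∑ _i : Fin k, D₂ :=
        Finset.sum_le_sum (fun i _ => hF i)
      have hstep4 : ∑ _i : Fin k, D₂ = (k : ℝ) * D₂ := by
        rw [Finset.sum_const, Finset.card_univ, Fintype.card_fin, nsmul_eq_mul]
      linarith [hstep1, hstep2 ▸ hstep1, hstep3, hstep4 ▸ hstep3]
    calc ∑ r ∈ Tc, ‖diff r‖
        ≤ (2 * Y * (((k : ℝ) + 1) / (k : ℝ) ^ 2)) * ∑ r ∈ Tc, ∑ i, ‖F i r‖ ^ p :=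
          h2a.trans (le_of_eq h2b)
      _ ≤ (2 * Y * (((k : ℝ) + 1) / (k : ℝ) ^ 2)) * ((k : ℝ) * D₂) := by
          apply mul_le_mul_of_nonneg_left h2c
          apply mul_nonneg (mul_nonneg (by norm_num) hYnn)
          positivity
  -- combine
  have hsplitsum : ∑ r : ZMod N, ‖diff r‖
      = ∑ r ∈ T, ‖diff r‖ + ∑ r ∈ Tc, ‖diff r‖ :=
    (Finset.sum_filter_add_sum_filter_not Finset.univ _ _).symm
  have hπ : Real.pi ^ 2 ≤ 10 := by nlinarith [Real.pi_lt_d2, Real.pi_pos]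
  have hTbound : (D₁ * X) * ((k : ℝ) * (4 * Real.pi ^ 2 * ε ^ 2)) ≤ 40 * (k : ℝ) * (D₁ * ε ^ 2 * X) := by
    have h1 : (D₁ * X) * ((k : ℝ) * (4 * Real.pi ^ 2 * ε ^ 2))
        = (4 * Real.pi ^ 2) * ((k : ℝ) * (D₁ * ε ^ 2 * X)) := by ring
    have h2 : (4 * Real.pi ^ 2) * ((k : ℝ) * (D₁ * ε ^ 2 * X)) ≤ 40 * ((k : ℝ) * (D₁ * ε ^ 2 * X)) := by
      apply mul_le_mul_of_nonneg_right (by linarith)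
      exact mul_nonneg hk0'.le (mul_nonneg (mul_nonneg hD₁.le (sq_nonneg ε)) hXnn)
    rw [h1]
    linarith
  have hTcbound : (2 * Y * (((k : ℝ) + 1) / (k : ℝ) ^ 2)) * ((k : ℝ) * D₂)
      ≤ 40 * (k : ℝ) * (D₂ * Y) := by
    have hq : (2 * Y * (((k : ℝ) + 1) / (k : ℝ) ^ 2)) * ((k : ℝ) * D₂)
        = (2 * (((k : ℝ) + 1) / (k : ℝ))) * (D₂ * Y) := by
      field_simp
    have hq2 : ((k : ℝ) + 1) / (k : ℝ) ≤ 2 := by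
      rw [div_le_iff₀ hk0']
      linarith
    have hDY : 0 ≤ D₂ * Y := mul_nonneg hD₂.le hYnn
    have hq3 : (2 * (((k : ℝ) + 1) / (k : ℝ))) * (D₂ * Y) ≤ 4 * (D₂ * Y) := by
      apply mul_le_mul_of_nonneg_right (by linarith) hDY
    have hq4 : 4 * (D₂ * Y) ≤ 40 * (k : ℝ) * (D₂ * Y) := by
      apply mul_le_mul_of_nonneg_right _ hDY
      linarith
    rw [hq]
    linarith
  have hfinal : (N : ℝ) * |S' - S| ≤ 40 * (k : ℝ) * (D₁ * ε ^ 2 * X + D₂ * Y) := by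
    have := habsmain
    rw [hsplitsum] at this
    linarith [hsumT, hsumTc, hTbound, hTcbound]
  rw [le_div_iff₀ hNpos]
  calc |S' - S| * (N : ℝ) = (N : ℝ) * |S' - S| := mul_comm _ _
    _ ≤ 40 * (k : ℝ) * (D₁ * ε ^ 2 * X + D₂ * Y) := hfinal
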